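/- Let L be a finite geometric lattice with the minimal labeling λ induced by a linear order on its atoms. Then the directed edges of G_lex are exactly the cover relations of the maximal chain descent order P_λ(2) on the maximal chains of L; that is, G_lex is the Hasse diagram of P_λ(2). -/

import Mathlib

/-- A finite bounded lattice is *geometric* if it is atomistic (every element is a join
of atoms) and semimodular (whenever distinct `y`, `y'` both cover `x`, the join `y ⊔ y'`
covers both). -/
def IsGeometricLattice (L : Type*) [Lattice L] [BoundedOrder L] : Prop :=
  (∀ x : L, ∃ s : Finset L, (∀ a ∈ s, IsAtom a) ∧ s.sup id = x) ∧
  (∀ x y y' : L, y ≠ y' → x ⋖ y → x ⋖ y' → y ⋖ (y ⊔ y') ∧ y' ⋖ (y ⊔ y'))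

/-- `lab` is the minimal labeling induced by the linear order on the atoms of `L`
represented by the function `f` (injective on atoms): for every cover relation `u ⋖ v`,
`lab u v` is the atom `a ≤ v` with `a ≰ u` having the least value of `f`. -/
def IsMinimalLabeling {L : Type*} [Lattice L] [OrderBot L] (f : L → ℕ) (lab : L → L → L) : Prop :=
  ∀ u v : L, u ⋖ v →
    IsAtom (lab u v) ∧ lab u v ≤ v ∧ ¬ lab u v ≤ u ∧
    ∀ a : L, IsAtom a → a ≤ v → ¬ a ≤ u → f (lab u v) ≤ f a

/-- `g` is a maximal chain `⊥ = g 0 ⋖ g 1 ⋖ ⋯ ⋖ g r = ⊤`. -/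
def IsMaxChainFun {L : Type*} [PartialOrder L] [BoundedOrder L] (r : ℕ)
    (g : Fin (r+1) → L) : Prop :=
  g 0 = ⊥ ∧ g (Fin.last r) = ⊤ ∧ ∀ i : Fin r, g i.castSucc ⋖ g i.succ

/-- The label sequence of the maximal chain `g` with respect to the labeling `lab`. -/
def labelSeq {L : Type*} (lab : L → L → L) {r : ℕ} (g : Fin (r+1) → L) (i : Fin r) : L :=
  lab (g i.castSucc) (g i.succ)

/-- The operator `T_i` of the directed graph `G_lex`: `TMove f lab i M M'` holds iff the
label sequence of `M` has a descent at rank `i` and `M'` is obtained from `M` by replacing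
the rank-`i` element by the unique element producing an ascent there, all other elements
unchanged. -/
def TMove {L : Type*} (f : L → ℕ) (lab : L → L → L) {r : ℕ} (i : ℕ)
    (M M' : Fin (r+1) → L) : Prop :=
  ∃ (h1 : 0 < i) (h2 : i < r),
    f (lab (M ⟨i, by omega⟩) (M ⟨i+1, by omega⟩)) <
      f (lab (M ⟨i-1, by omega⟩) (M ⟨i, by omega⟩)) ∧
    M' ⟨i, by omega⟩ ≠ M ⟨i, by omega⟩ ∧
    (∀ j : Fin (r+1), (j : ℕ) ≠ i → M' j = M j) ∧
    f (lab (M' ⟨i-1, by omega⟩) (M' ⟨i, by omega⟩)) ≤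
      f (lab (M' ⟨i, by omega⟩) (M' ⟨i+1, by omega⟩))

/-- A polygon move of the maximal chain descent order `P_λ(2)` (for a geometric lattice its
intervals of rank 2 are diamonds, so a polygon move replaces the element at a descent by
the unique element producing an ascent): this is exactly a directed edge of `G_lex`. -/
def PolygonMove {L : Type*} [PartialOrder L] [BoundedOrder L] (f : L → ℕ)
    (lab : L → L → L) {r : ℕ} (M M' : {g : Fin (r+1) → L // IsMaxChainFun r g}) : Prop :=
  ∃ i : ℕ, TMove f lab i M.1 M'.1

section AuxProofs

variable {L : Type*} [Lattice L] [BoundedOrder L] {r : ℕ}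

/-- The sequence of `f`-values of the labels of a chain, as a function `ℕ → ℕ`. -/
def wseq (f : L → ℕ) (lab : L → L → L) (g : Fin (r+1) → L) (p : ℕ) : ℕ :=
  if h : p + 1 ≤ r then f (lab (g ⟨p, by omega⟩) (g ⟨p+1, by omega⟩)) else 0

lemma wseq_eq (f : L → ℕ) (lab : L → L → L) (g : Fin (r+1) → L) (p : ℕ) (hp : p + 1 ≤ r) :
    wseq f lab g p = f (lab (g ⟨p, by omega⟩) (g ⟨p+1, by omega⟩)) := by
  simp only [wseq, dif_pos hp]

lemma congr_mk (g : Fin (r+1) → L) {a b : ℕ} (ha : a < r+1) (hb : b < r+1) (e : a = b) :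
    g ⟨a, ha⟩ = g ⟨b, hb⟩ := by subst e; rfl

lemma chain_cov {g : Fin (r+1) → L} (hg : IsMaxChainFun r g) (a : ℕ) (ha : a + 1 ≤ r) :
    g ⟨a, by omega⟩ ⋖ g ⟨a+1, by omega⟩ := hg.2.2 ⟨a, by omega⟩

lemma step_facts {f : L → ℕ} {lab : L → L → L}
    (hf : Set.InjOn f {a : L | IsAtom a}) (hlab : IsMinimalLabeling f lab)
    {q : ℕ} {X X' : Fin (r+1) → L} (hX : IsMaxChainFun r X) (hX' : IsMaxChainFun r X')
    (hT : TMove f lab q X X') :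
    1 ≤ q ∧ q < r ∧
    (∀ p, p ≠ q - 1 → p ≠ q → wseq f lab X' p = wseq f lab X p) ∧
    wseq f lab X' (q-1) = wseq f lab X q ∧
    wseq f lab X q < wseq f lab X (q-1) ∧
    wseq f lab X q < wseq f lab X' q ∧
    wseq f lab X' (q-1) ≤ wseq f lab X' q := by
  obtain ⟨h1, h2, hdesc, hne, hext, hasc⟩ := hT
  have hx' : q - 1 < r + 1 := by omega
  have hy' : q < r + 1 := by omega
  have hz' : q + 1 < r + 1 := by omega
  set x := X ⟨q-1, hx'⟩ with hxdef
  set y := X ⟨q, hy'⟩ with hydef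
  set z := X ⟨q+1, hz'⟩ with hzdef
  set y2 := X' ⟨q, hy'⟩ with hy2def
  have hX'x : X' ⟨q-1, hx'⟩ = x := by
    rw [hext ⟨q-1, hx'⟩ (show q - 1 ≠ q by omega)]
  have hX'z : X' ⟨q+1, hz'⟩ = z := by
    rw [hext ⟨q+1, hz'⟩ (show q + 1 ≠ q by omega)]
  -- cover relations
  have hxy : x ⋖ y := by
    have h := chain_cov hX (q-1) (by omega)
    rwa [congr_mk X (by omega) hy' (by omega : q - 1 + 1 = q)] at h
  have hyz : y ⋖ z := chain_cov hX q (by omega)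
  have hxy2 : x ⋖ y2 := by
    have h := chain_cov hX' (q-1) (by omega)
    rw [congr_mk X' (by omega) hy' (by omega : q - 1 + 1 = q)] at h
    rwa [hX'x] at h
  have hy2z : y2 ⋖ z := by
    have h := chain_cov hX' q (by omega)
    rwa [hX'z] at h
  -- labels
  obtain ⟨hAatom, hAle, hAnle, hAmin⟩ := hlab x y hxy
  obtain ⟨hBatom, hBle, hBnle, hBmin⟩ := hlab y z hyz
  obtain ⟨hB'atom, hB'le, hB'nle, hB'min⟩ := hlab x y2 hxy2
  obtain ⟨hA'atom, hA'le, hA'nle, hA'min⟩ := hlab y2 z hy2z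
  have hdesc' : f (lab y z) < f (lab x y) := hdesc
  have hasc' : f (lab x y2) ≤ f (lab y2 z) := by
    have h := hasc
    rw [show X' ⟨q-1, by omega⟩ = x from hX'x, show X' ⟨q+1, by omega⟩ = z from hX'z] at h
    exact h
  have hBnx : ¬ lab y z ≤ x := fun h => hBnle (h.trans hxy.le)
  -- key minimality over the whole interval
  have key : ∀ d : L, IsAtom d → d ≤ z → ¬ d ≤ x → f (lab y z) ≤ f d := by
    intro d hd hdz hdx
    by_cases hdy : d ≤ y
    · exact le_of_lt (lt_of_lt_of_le hdesc' (hAmin d hd hdy hdx))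
    · exact hBmin d hd hdz hdy
  have hfBB' : f (lab y z) ≤ f (lab x y2) :=
    key _ hB'atom (hB'le.trans hy2z.le) (fun h => hB'nle h)
  have hA'nx : ¬ lab y2 z ≤ x := fun h => hA'nle (h.trans hxy2.le)
  have hfBA' : f (lab y z) ≤ f (lab y2 z) := key _ hA'atom hA'le hA'nx
  have hBy2 : lab y z ≤ y2 := by
    by_contra hc
    have h1' : f (lab y2 z) ≤ f (lab y z) := hA'min _ hBatom hBle hc
    have hA'B : lab y2 z = lab y z := hf hA'atom hBatom (le_antisymm h1' hfBA')
    have hB'B : lab x y2 = lab y z :=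
      hf hB'atom hBatom (le_antisymm (hasc'.trans h1') hfBB')
    exact hc (hB'B ▸ hB'le)
  have hfB'B : f (lab x y2) ≤ f (lab y z) := hB'min _ hBatom hBy2 hBnx
  have hfB'eq : f (lab x y2) = f (lab y z) := le_antisymm hfB'B hfBB'
  have hA'neB : lab y2 z ≠ lab y z := fun e => hA'nle (e ▸ hBy2)
  have hfBA'strict : f (lab y z) < f (lab y2 z) := by
    rcases lt_or_eq_of_le hfBA' with h | h
    · exact h
    · exact absurd (hf hA'atom hBatom h.symm) hA'neB
  -- translate to wseq values
  have hw1 : wseq f lab X (q-1) = f (lab x y) := by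
    rw [wseq_eq f lab X (q-1) (by omega),
      congr_mk X (by omega) hy' (by omega : q - 1 + 1 = q)]
  have hw2 : wseq f lab X q = f (lab y z) := wseq_eq f lab X q (by omega)
  have hw3 : wseq f lab X' (q-1) = f (lab x y2) := by
    rw [wseq_eq f lab X' (q-1) (by omega),
      congr_mk X' (by omega) hy' (by omega : q - 1 + 1 = q)]
    rw [show X' ⟨q-1, by omega⟩ = x from hX'x]
  have hw4 : wseq f lab X' q = f (lab y2 z) := by
    rw [wseq_eq f lab X' q (by omega)]
    rw [show X' ⟨q+1, by omega⟩ = z from hX'z]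
  refine ⟨by omega, h2, ?_, ?_, ?_, ?_, ?_⟩
  · intro p hp1 hp2
    by_cases hp : p + 1 ≤ r
    · rw [wseq_eq f lab X' p hp, wseq_eq f lab X p hp,
        hext ⟨p, by omega⟩ (show p ≠ q from hp2),
        hext ⟨p+1, by omega⟩ (show p + 1 ≠ q by omega)]
    · simp only [wseq, dif_neg hp]
  · rw [hw3, hw2, hfB'eq]
  · rw [hw1, hw2]; exact hdesc'
  · rw [hw2, hw4]; exact hfBA'strict
  · rw [hw3, hw4, hfB'eq]; exact le_of_lt hfBA'strict

lemma path_net {f : L → ℕ} {lab : L → L → L}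
    (hf : Set.InjOn f {a : L | IsAtom a}) (hlab : IsMinimalLabeling f lab)
    {Y Z : {g : Fin (r+1) → L // IsMaxChainFun r g}}
    (h : Relation.TransGen (PolygonMove f lab) Y Z) :
    ∃ m M : ℕ, 1 ≤ m ∧ M < r ∧ m ≤ M ∧
      (∀ p, p + 1 < m → wseq f lab Z.1 p = wseq f lab Y.1 p) ∧
      wseq f lab Z.1 (m-1) < wseq f lab Y.1 (m-1) ∧
      wseq f lab Y.1 M < wseq f lab Z.1 M ∧
      (∀ p, M < p → wseq f lab Z.1 p = wseq f lab Y.1 p) ∧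
      ∃ (Y1 : {g : Fin (r+1) → L // IsMaxChainFun r g}) (q1 : ℕ),
        TMove f lab q1 Y.1 Y1.1 ∧ m ≤ q1 ∧ q1 ≤ M ∧
        (Y1 = Z ∨ Relation.TransGen (PolygonMove f lab) Y1 Z) := by
  induction h using Relation.TransGen.head_induction_on with
  | single h =>
    rename_i W
    obtain ⟨q, hT⟩ := h
    obtain ⟨hq1, hq2, hunch, hdropeq, hdesc, hraise, hascf⟩ :=
      step_facts hf hlab W.2 Z.2 hT
    refine ⟨q, q, hq1, hq2, le_refl q, ?_, ?_, hraise, ?_, Z, q, hT, le_refl q, le_refl q,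
      Or.inl rfl⟩
    · intro p hp; exact hunch p (by omega) (by omega)
    · rw [hdropeq]; exact hdesc
    · intro p hp; exact hunch p (by omega) (by omega)
  | head hstep ht IH =>
    rename_i W W'
    obtain ⟨q, hT⟩ := hstep
    obtain ⟨hq1, hq2, hunch, hdropeq, hdesc, hraise, hascf⟩ :=
      step_facts hf hlab W.2 W'.2 hT
    obtain ⟨m', M', hm'1, hM'r, hmM', hub, hdr, hrs, hua, _, _, _, _, _, _⟩ := IH
    refine ⟨min q m', max q M', le_min hq1 hm'1, by omega, le_trans (min_le_left _ _)
      (le_max_left _ _), ?_, ?_, ?_, ?_, W', q, hT, min_le_left _ _, le_max_left _ _,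
      Or.inr ht⟩
    · intro p hp
      rw [hub p (by omega), hunch p (by omega) (by omega)]
    · rcases Nat.lt_trichotomy q m' with h | h | h
      · rw [show min q m' = q by omega, hub (q-1) (by omega), hdropeq]
        exact hdesc
      · subst h
        rw [show min q q = q from min_self q]
        calc wseq f lab Z.1 (q-1) < wseq f lab W'.1 (q-1) := hdr
          _ = wseq f lab W.1 q := hdropeq
          _ < wseq f lab W.1 (q-1) := hdesc
      · rw [show min q m' = m' by omega, ← hunch (m'-1) (by omega) (by omega)]
        exact hdr
    · rcases Nat.lt_trichotomy q M' with h | h | h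
      · rw [show max q M' = M' by omega, ← hunch M' (by omega) (by omega)] at *
        exact hrs
      · subst h
        rw [max_self]
        calc wseq f lab W.1 q < wseq f lab W'.1 q := hraise
          _ < wseq f lab Z.1 q := hrs
      · rw [show max q M' = q by omega, hua q (by omega)]
        exact hraise
    · intro p hp
      rw [hua p (by omega), hunch p (by omega) (by omega)]

lemma comb_drop (u v w : ℕ → ℕ) (m m' : ℕ) (hm : 1 ≤ m) (hm' : 1 ≤ m')
    (e1 : ∀ p, p + 1 < m → v p = u p) (d1 : v (m-1) < u (m-1))
    (e2 : ∀ p, p + 1 < m' → w p = v p) (d2 : w (m'-1) < v (m'-1)) :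
    w (min m m' - 1) < u (min m m' - 1) := by
  rcases Nat.lt_trichotomy m m' with h | h | h
  · rw [show min m m' = m by omega]
    rw [e2 (m-1) (by omega)]; exact d1
  · subst h; rw [min_self]; exact lt_trans d2 d1
  · rw [show min m m' = m' by omega]
    rw [e1 (m'-1) (by omega)] at d2; exact d2

lemma comb_raise (u v w : ℕ → ℕ) (M M' : ℕ)
    (e1 : ∀ p, M < p → v p = u p) (r1 : u M < v M)
    (e2 : ∀ p, M' < p → w p = v p) (r2 : v M' < w M') :
    u (max M M') < w (max M M') := by
  rcases Nat.lt_trichotomy M M' with h | h | h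
  · rw [show max M M' = M' by omega]
    rw [← e1 M' (by omega)]
    exact r2
  · subst h; rw [max_self]; exact lt_trans r1 r2
  · rw [show max M M' = M by omega, e2 M (by omega)]
    exact r1

end AuxProofs

/-- The directed edges of `G_lex` are exactly the cover relations of the maximal chain
descent order `P_λ(2)` (the transitive closure of the polygon moves); that is, `G_lex` is
the Hasse diagram of `P_λ(2)`: `M'` is covered by `M` (nothing strictly between) iff
there is a polygon move from `M` to `M'`. -/



theorem stmt17 (L : Type*) [Lattice L] [Fintype L] [BoundedOrder L] (r : ℕ)
    (hgeo : IsGeometricLattice L)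
    (hrank : ∀ c : Set L, IsMaxChain (· ≤ ·) c → c.ncard = r + 1)
    (f : L → ℕ) (hf : Set.InjOn f {a : L | IsAtom a})
    (lab : L → L → L) (hlab : IsMinimalLabeling f lab) :
    ∀ M M' : {g : Fin (r+1) → L // IsMaxChainFun r g},
      PolygonMove f lab M M' ↔
        (Relation.TransGen (PolygonMove f lab) M M' ∧
          ¬ ∃ X : {g : Fin (r+1) → L // IsMaxChainFun r g}, X ≠ M ∧ X ≠ M' ∧
            Relation.TransGen (PolygonMove f lab) M X ∧
            Relation.TransGen (PolygonMove f lab) X M') := by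
  intro M M'
  constructor
  · intro hmv
    refine ⟨Relation.TransGen.single hmv, ?_⟩
    rintro ⟨X, hXM, hXM', t1, t2⟩
    obtain ⟨i, hT⟩ := hmv
    obtain ⟨hi1, hir, hTunch, hTdropeq, hTdesc, hTraise, hTasc⟩ :=
      step_facts hf hlab M.2 M'.2 hT
    have hTdrop : wseq f lab M'.1 (i-1) < wseq f lab M.1 (i-1) := by
      rw [hTdropeq]; exact hTdesc
    obtain ⟨m1, M1, hm1, hM1, hmM1, hub1, hdr1, hrs1, hua1, Y1, q1, T1, hq1a, hq1b, disj1⟩ :=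
      path_net hf hlab t1
    obtain ⟨m2, M2, hm2, hM2, hmM2, hub2, hdr2, hrs2, hua2, Y2, q2, T2, hq2a, hq2b, disj2⟩ :=
      path_net hf hlab t2
    have hdropc := comb_drop (wseq f lab M.1) (wseq f lab X.1) (wseq f lab M'.1)
      m1 m2 hm1 hm2 hub1 hdr1 hub2 hdr2
    have hraisc := comb_raise (wseq f lab M.1) (wseq f lab X.1) (wseq f lab M'.1)
      M1 M2 hua1 hrs1 hua2 hrs2
    have hmin12 : min m1 m2 = i := by
      by_contra hc
      rcases eq_or_ne (min m1 m2 - 1) i with he | hne'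
      · rw [he] at hdropc; omega
      · have := hTunch (min m1 m2 - 1) (by omega) hne'
        omega
    have hmax12 : max M1 M2 = i := by
      by_contra hc
      rcases eq_or_ne (max M1 M2) (i-1) with he | hne'
      · rw [he] at hraisc; omega
      · have := hTunch (max M1 M2) hne' hc
        omega
    have hm1i : m1 = i := by omega
    have hM1i : M1 = i := by omega
    have hm2i : m2 = i := by omega
    have hM2i : M2 = i := by omega
    rw [show q1 = i by omega] at T1
    rw [show q2 = i by omega] at T2
    obtain ⟨_, _, hU1, hDe1, _, hR1, hAsc1⟩ := step_facts hf hlab M.2 Y1.2 T1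
    rcases disj1 with hYX | t3
    · obtain ⟨_, _, _, _, hdesc2, _, _⟩ := step_facts hf hlab X.2 Y2.2 T2
      rw [hYX] at hAsc1
      omega
    · obtain ⟨m3, M3, hm3, hM3r, hmM3, hub3, hdr3, hrs3, hua3, Y3, q3, T3, hq3a, hq3b, disj3⟩ :=
        path_net hf hlab t3
      have hdropc2 := comb_drop (wseq f lab Y1.1) (wseq f lab X.1) (wseq f lab M'.1)
        m3 m2 hm3 hm2 hub3 hdr3 hub2 hdr2
      have hraisc2 := comb_raise (wseq f lab Y1.1) (wseq f lab X.1) (wseq f lab M'.1)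
        M3 M2 hua3 hrs3 hua2 hrs2
      have hmu : min m3 m2 = i := by
        by_contra hc
        have h1 : min m3 m2 < i := by omega
        have e1 : wseq f lab Y1.1 (min m3 m2 - 1) = wseq f lab M.1 (min m3 m2 - 1) :=
          hU1 _ (by omega) (by omega)
        have e2 : wseq f lab M'.1 (min m3 m2 - 1) = wseq f lab M.1 (min m3 m2 - 1) :=
          hTunch _ (by omega) (by omega)
        omega
      have hnu : max M3 M2 = i := by
        by_contra hc
        have h1 : i < max M3 M2 := by omega
        have e1 : wseq f lab Y1.1 (max M3 M2) = wseq f lab M.1 (max M3 M2) :=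
          hU1 _ (by omega) (by omega)
        have e2 : wseq f lab M'.1 (max M3 M2) = wseq f lab M.1 (max M3 M2) :=
          hTunch _ (by omega) (by omega)
        omega
      rw [show q3 = i by omega] at T3
      obtain ⟨_, _, _, _, hdesc3, _, _⟩ := step_facts hf hlab Y1.2 Y3.2 T3
      omega
  · rintro ⟨t, hno⟩
    obtain ⟨c, hMc, hcM'⟩ := Relation.TransGen.head'_iff.mp t
    rcases eq_or_ne c M' with rfl | hne
    · exact hMc
    · exfalso
      apply hno
      refine ⟨c, ?_, hne, Relation.TransGen.single hMc, ?_⟩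
      · obtain ⟨q, hq1', hq2', _, hne', _⟩ := hMc
        intro e
        rw [e] at hne'
        exact hne' rfl
      · rcases Relation.reflTransGen_iff_eq_or_transGen.mp hcM' with he | ht
        · exact absurd he.symm hne
        · exact ht
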